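/- Let 𝒳 be a d-mode tensor with side lengths n, and for each j ∈ [d] let P_j = Q_jQ_jᵀ where Q_j ∈ ℝ^{n×r} has orthonormal columns. Then ‖𝒳 − 𝒳 ×₁ P₁ ×₂ ⋯ ×_d P_d‖₂² ≤ Σ_{j=1}^d ‖𝒳 − 𝒳 ×_j P_j‖₂², where ×_j is the mode-j product and ‖·‖₂ the tensor Frobenius norm. -/

import Mathlib

open Matrix

namespace Stmt15Aux

variable {d n : ℕ}

/-- pointwise inner product of tensors -/
def inn (f g : (Fin d → Fin n) → ℝ) : ℝ := ∑ i, f i * g i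

/-- squared Frobenius norm -/
def nsq (f : (Fin d → Fin n) → ℝ) : ℝ := ∑ i, f i ^ 2

lemma nsq_eq_inn (f : (Fin d → Fin n) → ℝ) : nsq f = inn f f := by
  simp [nsq, inn, sq]

lemma nsq_nonneg (f : (Fin d → Fin n) → ℝ) : 0 ≤ nsq f :=
  Finset.sum_nonneg fun _ _ => sq_nonneg _

/-- mode-j product operator -/
def T (P : Fin d → Matrix (Fin n) (Fin n) ℝ) (j : Fin d) (f : (Fin d → Fin n) → ℝ) :
    (Fin d → Fin n) → ℝ :=
  fun i => ∑ t, P j (i j) t * f (Function.update i j t)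

/-- matrix of composition of mode-j products over a finset of modes -/
def M (P : Fin d → Matrix (Fin n) (Fin n) ℝ) (s : Finset (Fin d)) :
    (Fin d → Fin n) → (Fin d → Fin n) → ℝ :=
  fun i k => ∏ j, if j ∈ s then P j (i j) (k j) else if k j = i j then 1 else 0

def G (P : Fin d → Matrix (Fin n) (Fin n) ℝ) (s : Finset (Fin d))
    (f : (Fin d → Fin n) → ℝ) : (Fin d → Fin n) → ℝ :=
  fun i => ∑ k, M P s i k * f k

lemma G_empty (P : Fin d → Matrix (Fin n) (Fin n) ℝ) (f : (Fin d → Fin n) → ℝ) :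
    G P ∅ f = f := by
  funext i
  have hM : ∀ k, M P ∅ i k = if k = i then 1 else 0 := by
    intro k
    simp only [M, Finset.notMem_empty, if_false]
    rw [Fintype.prod_boole]
    congr 1
    simp [funext_iff, eq_comm]
  simp [G, hM]

lemma G_insert (P : Fin d → Matrix (Fin n) (Fin n) ℝ) {s : Finset (Fin d)} {j : Fin d}
    (hj : j ∉ s) (f : (Fin d → Fin n) → ℝ) :
    G P (insert j s) f = T P j (G P s f) := by
  funext i
  have key : ∀ k, ∑ t, P j (i j) t * M P s (Function.update i j t) k
      = M P (insert j s) i k := by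
    intro k
    set R : ℝ :=
      ∏ j' ∈ {j}ᶜ, (if j' ∈ s then P j' (i j') (k j') else if k j' = i j' then 1 else 0) with hR
    have hsplit : ∀ t, M P s (Function.update i j t) k
        = (if k j = t then 1 else 0) * R := by
      intro t
      rw [M, Fintype.prod_eq_mul_prod_compl j, hR]
      congr 1
      · simp [hj]
      · apply Finset.prod_congr rfl
        intro j' hj'
        have : j' ≠ j := by simpa using hj'
        simp [Function.update_of_ne this]
    have hRHS : M P (insert j s) i k = P j (i j) (k j) * R := by
      rw [M, Fintype.prod_eq_mul_prod_compl j, hR]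
      congr 1
      · simp
      · apply Finset.prod_congr rfl
        intro j' hj'
        have : j' ≠ j := by simpa using hj'
        simp [Finset.mem_insert, this]
    rw [hRHS]
    calc ∑ t, P j (i j) t * M P s (Function.update i j t) k
        = ∑ t, if k j = t then P j (i j) t * R else 0 := by
          apply Finset.sum_congr rfl
          intro t _
          rw [hsplit t]
          by_cases h : k j = t <;> simp [h]
      _ = P j (i j) (k j) * R := by rw [Finset.sum_ite_eq]; simp
  simp only [G, T, Finset.mul_sum]
  rw [Finset.sum_comm]
  apply Finset.sum_congr rfl
  intro k _
  rw [← key, Finset.sum_mul]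
  apply Finset.sum_congr rfl
  intro t _
  ring

lemma T_symm (P : Fin d → Matrix (Fin n) (Fin n) ℝ)
    (hsym : ∀ j a b, P j a b = P j b a) (j : Fin d) (f g : (Fin d → Fin n) → ℝ) :
    inn (T P j f) g = inn f (T P j g) := by
  have hflat : ∀ h : (Fin d → Fin n) × Fin n → ℝ,
      ∑ p : (Fin d → Fin n) × Fin n, h p = ∑ i, ∑ t, h (i, t) := fun h =>
    Fintype.sum_prod_type h
  simp only [inn, T, Finset.sum_mul, Finset.mul_sum]
  calc ∑ i, ∑ t, P j (i j) t * f (Function.update i j t) * g i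
      = ∑ p : (Fin d → Fin n) × Fin n,
          P j (p.1 j) p.2 * f (Function.update p.1 j p.2) * g p.1 :=
        (hflat fun p => P j (p.1 j) p.2 * f (Function.update p.1 j p.2) * g p.1).symm
    _ = ∑ p : (Fin d → Fin n) × Fin n,
          f p.1 * (P j (p.1 j) p.2 * g (Function.update p.1 j p.2)) := by
        apply Fintype.sum_equiv
          ⟨fun p => (Function.update p.1 j p.2, p.1 j),
           fun p => (Function.update p.1 j p.2, p.1 j),
           fun p => by simp [Function.update_idem, Function.update_eq_self],
           fun p => by simp [Function.update_idem, Function.update_eq_self]⟩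
        intro p
        simp only [Equiv.coe_fn_mk, Function.update_self, Function.update_idem,
          Function.update_eq_self]
        rw [hsym j (p.1 j) p.2]
        ring
    _ = ∑ i, ∑ t, f i * (P j (i j) t * g (Function.update i j t)) :=
        hflat fun p => f p.1 * (P j (p.1 j) p.2 * g (Function.update p.1 j p.2))

lemma T_idem (P : Fin d → Matrix (Fin n) (Fin n) ℝ)
    (hid : ∀ j a b, ∑ t, P j a t * P j t b = P j a b) (j : Fin d)
    (f : (Fin d → Fin n) → ℝ) : T P j (T P j f) = T P j f := by
  funext i
  simp only [T, Function.update_self, Function.update_idem, Finset.mul_sum]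
  rw [Finset.sum_comm]
  apply Finset.sum_congr rfl
  intro s _
  rw [← hid j (i j) s, Finset.sum_mul]
  apply Finset.sum_congr rfl
  intro t _
  ring

lemma T_sub (P : Fin d → Matrix (Fin n) (Fin n) ℝ) (j : Fin d)
    (f g : (Fin d → Fin n) → ℝ) : T P j (f - g) = T P j f - T P j g := by
  funext i
  simp [T, mul_sub, Finset.sum_sub_distrib]

lemma T_contract (P : Fin d → Matrix (Fin n) (Fin n) ℝ)
    (hsym : ∀ j a b, P j a b = P j b a)
    (hid : ∀ j a b, ∑ t, P j a t * P j t b = P j a b) (j : Fin d)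
    (f : (Fin d → Fin n) → ℝ) : nsq (T P j f) ≤ nsq f := by
  have h1 : nsq (T P j f) = inn f (T P j f) := by
    rw [nsq_eq_inn, T_symm P hsym, T_idem P hid]
  have h2 : (inn f (T P j f)) ^ 2 ≤ nsq f * nsq (T P j f) := by
    simpa [inn, nsq] using Finset.sum_mul_sq_le_sq_mul_sq Finset.univ f (T P j f)
  rcases eq_or_lt_of_le (nsq_nonneg (T P j f)) with h | h
  · rw [← h]; exact nsq_nonneg f
  · have := h2
    rw [← h1] at this
    nlinarith [this]

lemma pyth (P : Fin d → Matrix (Fin n) (Fin n) ℝ)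
    (hsym : ∀ j a b, P j a b = P j b a)
    (hid : ∀ j a b, ∑ t, P j a t * P j t b = P j a b) (j : Fin d)
    (f g : (Fin d → Fin n) → ℝ) :
    nsq (f - T P j g) = nsq (f - T P j f) + nsq (T P j (f - g)) := by
  have horth : inn (f - T P j f) (T P j (f - g)) = 0 := by
    rw [← T_symm P hsym, T_sub, T_idem P hid, sub_self]
    simp [inn]
  have hdecomp : f - T P j g = (f - T P j f) + T P j (f - g) := by
    rw [T_sub]; abel
  rw [hdecomp]
  have expand : ∀ a b : (Fin d → Fin n) → ℝ,
      nsq (a + b) = nsq a + 2 * inn a b + nsq b := by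
    intro a b
    simp only [nsq, inn, Finset.mul_sum, ← Finset.sum_add_distrib]
    apply Finset.sum_congr rfl
    intro i _
    simp only [Pi.add_apply]
    ring
  rw [expand, horth]; ring

lemma key (P : Fin d → Matrix (Fin n) (Fin n) ℝ)
    (hsym : ∀ j a b, P j a b = P j b a)
    (hid : ∀ j a b, ∑ t, P j a t * P j t b = P j a b)
    (s : Finset (Fin d)) (f : (Fin d → Fin n) → ℝ) :
    nsq (f - G P s f) ≤ ∑ j ∈ s, nsq (f - T P j f) := by
  induction s using Finset.induction with
  | empty => simp [G_empty, nsq]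
  | insert j s hj ih =>
    rw [G_insert P hj, Finset.sum_insert hj, pyth P hsym hid]
    have := T_contract P hsym hid j (f - G P s f)
    linarith

end Stmt15Aux

/-- Pythagorean-type inequality for modewise orthogonal projections: with
`P_j = Q_j Q_jᵀ` orthogonal projections applied along each mode of a `d`-mode tensor `𝒳`
(side length `n`), `‖𝒳 - 𝒳 ×₁ P₁ ⋯ ×_d P_d‖₂² ≤ ∑_j ‖𝒳 - 𝒳 ×_j P_j‖₂²`.  A `d`-mode tensor
is a function `(Fin d → Fin n) → ℝ`; the full modewise product has entries
`∑ k, (∏ j, P j (i j) (k j)) * 𝒳 k` and the single mode-`j` product has entries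
`∑ t, P j (i j) t * 𝒳 (update i j t)`. -/
theorem stmt_15 {d n r : ℕ} (X : (Fin d → Fin n) → ℝ)
    (Q : Fin d → Matrix (Fin n) (Fin r) ℝ) (hQ : ∀ j, (Q j)ᵀ * Q j = 1) :
    ∑ i : Fin d → Fin n,
        (X i - ∑ k : Fin d → Fin n, (∏ j, (Q j * (Q j)ᵀ) (i j) (k j)) * X k) ^ 2
      ≤ ∑ j : Fin d, ∑ i : Fin d → Fin n,
          (X i - ∑ t : Fin n, (Q j * (Q j)ᵀ) (i j) t * X (Function.update i j t)) ^ 2 := by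
  set P : Fin d → Matrix (Fin n) (Fin n) ℝ := fun j => Q j * (Q j)ᵀ with hP
  have hsym : ∀ j a b, P j a b = P j b a := by
    intro j a b
    simp only [hP, Matrix.mul_apply, Matrix.transpose_apply]
    exact Finset.sum_congr rfl fun c _ => mul_comm _ _
  have hid : ∀ j a b, ∑ t, P j a t * P j t b = P j a b := by
    intro j a b
    have : P j * P j = P j := by
      rw [hP, Matrix.mul_assoc, ← Matrix.mul_assoc (Q j)ᵀ, hQ, Matrix.one_mul]
    calc ∑ t, P j a t * P j t b = (P j * P j) a b := (Matrix.mul_apply).symm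
      _ = P j a b := by rw [this]
  have h := Stmt15Aux.key P hsym hid Finset.univ X
  have hL : Stmt15Aux.nsq (X - Stmt15Aux.G P Finset.univ X)
      = ∑ i : Fin d → Fin n,
        (X i - ∑ k : Fin d → Fin n, (∏ j, P j (i j) (k j)) * X k) ^ 2 := by
    apply Finset.sum_congr rfl
    intro i _
    congr 1
    simp [Stmt15Aux.G, Stmt15Aux.M]
  have hR : ∀ j, Stmt15Aux.nsq (X - Stmt15Aux.T P j X)
      = ∑ i : Fin d → Fin n,
        (X i - ∑ t : Fin n, P j (i j) t * X (Function.update i j t)) ^ 2 := by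
    intro j
    apply Finset.sum_congr rfl
    intro i _
    rfl
  rw [← hL]
  calc Stmt15Aux.nsq (X - Stmt15Aux.G P Finset.univ X)
      ≤ ∑ j : Fin d, Stmt15Aux.nsq (X - Stmt15Aux.T P j X) := h
    _ = _ := Finset.sum_congr rfl fun j _ => hR j
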